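/- Define for a continuous character η : Q_p^× → C^× the epsilon factor ε(η, s) = 1 if η is unramified, and ε(η, s) = p^{-ns} η(p)^n G(η^{-1}) if η has conductor p^n with n ≥ 1, where G is the Gauss sum relative to the additive character ψ(x) = ζ_{p^n}^{p^n x}. Then ε(η, s) · ε(η^{-1}, 1 − s) = η(−1). -/

import Mathlib

open Finset


/-- Sum of `z ^ (x*t).val` over `ZMod N`, for `z` of order exactly `N`. -/
lemma aux_sum_zmod {N : ℕ} [NeZero N] {z : ℂ} (hz : orderOf z = N) (t : ZMod N) :
    ∑ x : ZMod N, z ^ (x * t).val = if t = 0 then (N : ℂ) else 0 := by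
  have hzN : z ^ N = 1 := by rw [← hz]; exact pow_orderOf_eq_one z
  have hstep : ∀ x : ZMod N, z ^ (x * t).val = (z ^ t.val) ^ x.val := by
    intro x
    have hmod := pow_mod_orderOf z (x.val * t.val)
    rw [hz] at hmod
    rw [ZMod.val_mul, hmod, ← pow_mul, Nat.mul_comm]
  have hre : ∑ x : ZMod N, z ^ (x * t).val = ∑ k ∈ range N, (z ^ t.val) ^ k := by
    rw [Finset.sum_nbij' (i := fun x : ZMod N => x.val) (j := fun k : ℕ => (k : ZMod N))]
    · intro a _; exact mem_range.mpr (ZMod.val_lt a)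
    · intro a _; exact mem_univ _
    · intro a _; exact ZMod.natCast_rightInverse a
    · intro a ha; exact ZMod.val_cast_of_lt (mem_range.mp ha)
    · intro a _; exact hstep a
  rw [hre]
  by_cases ht : t = 0
  · simp [ht, ZMod.val_zero]
  · rw [if_neg ht]
    have hw : z ^ t.val ≠ 1 := by
      intro h
      have := orderOf_dvd_of_pow_eq_one h
      rw [hz] at this
      have hv : t.val = 0 := Nat.eq_zero_of_dvd_of_lt this (ZMod.val_lt t)
      exact ht ((ZMod.val_eq_zero t).mp hv)
    rw [geom_sum_eq hw, ← pow_mul, Nat.mul_comm, pow_mul, hzN, one_pow]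
    simp

/-- A nontrivially-translated character sum over a filter vanishes. -/
lemma aux_key0 {Γ : Type*} [CommGroup Γ] [Fintype Γ] (f : Γ →* ℂˣ) (P : Γ → Prop)
    [DecidablePred P] (k₀ : Γ) (hstab : ∀ k, P k ↔ P (k₀ * k)) (hfk₀ : f k₀ ≠ 1) :
    ∑ k ∈ univ.filter P, ((f k : ℂˣ) : ℂ) = 0 := by
  have h : ∑ k ∈ univ.filter P, ((f (k₀ * k) : ℂˣ) : ℂ) =
      ∑ k ∈ univ.filter P, ((f k : ℂˣ) : ℂ) := by
    refine Finset.sum_nbij' (i := fun k => k₀ * k) (j := fun k => k₀⁻¹ * k) ?_ ?_ ?_ ?_ ?_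
    · intro a ha
      simp only [mem_filter, mem_univ, true_and] at ha ⊢
      exact (hstab a).mp ha
    · intro a ha
      simp only [mem_filter, mem_univ, true_and] at ha ⊢
      have := (hstab (k₀⁻¹ * a)).mpr
      rw [mul_inv_cancel_left] at this
      exact this ha
    · intro a _; show k₀⁻¹ * (k₀ * a) = a; rw [inv_mul_cancel_left]
    · intro a _; show k₀ * (k₀⁻¹ * a) = a; rw [mul_inv_cancel_left]
    · intro a _; rfl
  have h2 : ∀ k, ((f (k₀ * k) : ℂˣ) : ℂ) = (f k₀ : ℂ) * (f k : ℂ) := by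
    intro k; rw [map_mul]; push_cast; ring
  simp only [h2, ← Finset.mul_sum] at h
  rcases mul_eq_mul_right_iff.mp (h.trans (one_mul _).symm) with h' | h'
  · exact absurd (Units.val_inj.mp h') hfk₀
  · exact h'

lemma aux_S (p : ℕ) [Fact p.Prime] (n : ℕ) (hn : n ≠ 0) {z : ℂ} (hz : orderOf z = p ^ n)
    (t : ZMod (p ^ n)) :
    haveI : NeZero (p ^ n) := ⟨pow_ne_zero n (Fact.out (p := p.Prime)).ne_zero⟩
    ∑ b : (ZMod (p ^ n))ˣ, z ^ ((↑b * t : ZMod (p ^ n)).val) =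
      (if t = 0 then ((p ^ n : ℕ) : ℂ) else 0)
        - (if ZMod.castHom (pow_dvd_pow p (Nat.sub_le n 1)) (ZMod (p ^ (n - 1))) t = 0
            then ((p ^ (n - 1) : ℕ) : ℂ) else 0) := by
  have hp : p.Prime := Fact.out
  haveI : NeZero (p ^ n) := ⟨pow_ne_zero n hp.ne_zero⟩
  haveI : NeZero (p ^ (n - 1)) := ⟨pow_ne_zero _ hp.ne_zero⟩
  have hpn : p ^ n = p ^ (n - 1) * p := by
    conv_lhs => rw [← Nat.sub_add_cancel (Nat.one_le_iff_ne_zero.mpr hn), pow_succ]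
  have hcong : ∀ A B : ℕ, A ≡ B [MOD p ^ n] → z ^ A = z ^ B := by
    intro A B hAB
    rw [← pow_mod_orderOf z A, ← pow_mod_orderOf z B, hz]
    exact congrArg (z ^ ·) hAB
  -- the full sum
  have hfull := aux_sum_zmod hz t
  -- split into unit and nonunit parts
  have hsplit : ∑ x : ZMod (p ^ n), z ^ (x * t).val =
      (∑ x ∈ univ.filter (fun x : ZMod (p ^ n) => IsUnit x), z ^ (x * t).val) +
      ∑ x ∈ univ.filter (fun x : ZMod (p ^ n) => ¬IsUnit x), z ^ (x * t).val :=
    (Finset.sum_filter_add_sum_filter_not univ _ _).symm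
  -- unit part is the sum over the unit group
  have hunit : ∑ x ∈ univ.filter (fun x : ZMod (p ^ n) => IsUnit x), z ^ (x * t).val =
      ∑ b : (ZMod (p ^ n))ˣ, z ^ ((↑b * t : ZMod (p ^ n)).val) := by
    refine (Finset.sum_nbij' (i := fun x : ZMod (p ^ n) => if h : IsUnit x then h.unit else 1)
      (j := fun b : (ZMod (p ^ n))ˣ => (b : ZMod (p ^ n))) ?_ ?_ ?_ ?_ ?_)
    · intro a _; exact mem_univ _
    · intro b _; simp [Units.isUnit]
    · intro a ha
      simp only [mem_filter, mem_univ, true_and] at ha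
      simp only [dif_pos ha, IsUnit.unit_spec]
    · intro b _
      show (if h : IsUnit (b : ZMod (p ^ n)) then h.unit else 1) = b
      rw [dif_pos b.isUnit]
      exact Units.val_inj.mp (IsUnit.unit_spec b.isUnit)
    · intro a ha
      simp only [mem_filter, mem_univ, true_and] at ha
      simp only [dif_pos ha, IsUnit.unit_spec]
  -- order of z^p
  have hznonzero : orderOf (z ^ p) = p ^ (n - 1) := by
    rw [orderOf_pow' z hp.ne_zero, hz, Nat.gcd_comm]
    rw [Nat.gcd_eq_left (dvd_pow_self p hn), hpn]
    exact Nat.mul_div_cancel _ hp.pos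
  -- nonunit part
  have hnonunit : ∑ x ∈ univ.filter (fun x : ZMod (p ^ n) => ¬IsUnit x), z ^ (x * t).val =
      ∑ y : ZMod (p ^ (n - 1)),
        (z ^ p) ^ ((y * ((t.val : ℕ) : ZMod (p ^ (n - 1)))).val) := by
    have hval_lt : ∀ y : ZMod (p ^ (n - 1)), p * y.val < p ^ n := by
      intro y
      rw [hpn, Nat.mul_comm]
      exact (Nat.mul_lt_mul_right hp.pos).mpr (ZMod.val_lt y)
    have hdvd : ∀ x : ZMod (p ^ n), ¬IsUnit x ↔ p ∣ x.val := by
      intro x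
      constructor
      · intro hx
        by_contra hdvd
        apply hx
        have hxx : x = ((x.val : ℕ) : ZMod (p ^ n)) := (ZMod.natCast_rightInverse x).symm
        rw [hxx, ZMod.isUnit_iff_coprime]
        rw [Nat.coprime_pow_right_iff (Nat.pos_of_ne_zero hn)]
        exact Nat.Coprime.symm ((hp.coprime_iff_not_dvd).mpr hdvd)
      · intro hx hu
        have hxx : x = ((x.val : ℕ) : ZMod (p ^ n)) := (ZMod.natCast_rightInverse x).symm
        rw [hxx, ZMod.isUnit_iff_coprime,
          Nat.coprime_pow_right_iff (Nat.pos_of_ne_zero hn)] at hu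
        exact (hp.coprime_iff_not_dvd.mp hu.symm) hx
    refine Finset.sum_nbij'
      (i := fun x : ZMod (p ^ n) => ((x.val / p : ℕ) : ZMod (p ^ (n - 1))))
      (j := fun y : ZMod (p ^ (n - 1)) => ((p * y.val : ℕ) : ZMod (p ^ n))) ?_ ?_ ?_ ?_ ?_
    · intro a _; exact mem_univ _
    · intro y _
      simp only [mem_filter, mem_univ, true_and]
      rw [hdvd, ZMod.val_natCast, Nat.mod_eq_of_lt (hval_lt y)]
      exact Dvd.intro _ rfl
    · intro a ha
      simp only [mem_filter, mem_univ, true_and] at ha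
      rw [hdvd] at ha
      have hlt : a.val / p < p ^ (n - 1) := by
        rw [Nat.div_lt_iff_lt_mul hp.pos, ← hpn]
        exact ZMod.val_lt a
      show (((p * (((a.val / p : ℕ) : ZMod (p ^ (n - 1))).val) : ℕ)) : ZMod (p ^ n)) = a
      rw [ZMod.val_natCast, Nat.mod_eq_of_lt hlt, Nat.mul_div_cancel' ha]
      exact ZMod.natCast_rightInverse a
    · intro y _
      show ((((((p * y.val : ℕ) : ZMod (p ^ n))).val / p : ℕ)) : ZMod (p ^ (n - 1))) = y
      rw [ZMod.val_natCast, Nat.mod_eq_of_lt (hval_lt y), Nat.mul_div_cancel_left _ hp.pos]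
      exact ZMod.natCast_rightInverse y
    · intro a ha
      simp only [mem_filter, mem_univ, true_and] at ha
      rw [hdvd] at ha
      show z ^ ((a * t).val) = (z ^ p) ^
        (((((a.val / p : ℕ) : ZMod (p ^ (n - 1)))) * ((t.val : ℕ) : ZMod (p ^ (n - 1)))).val)
      rw [← pow_mul]
      apply hcong
      rw [ZMod.val_mul, ZMod.val_mul, ZMod.val_natCast, ZMod.val_natCast]
      have h1 : (a.val / p % p ^ (n - 1)) * (t.val % p ^ (n - 1)) % p ^ (n - 1)
          ≡ (a.val / p) * t.val [MOD p ^ (n - 1)] :=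
        (Nat.mod_modEq _ _).trans ((Nat.mod_modEq _ _).mul (Nat.mod_modEq _ _))
      calc a.val * t.val % (p ^ n)
          ≡ a.val * t.val [MOD p ^ n] := Nat.mod_modEq _ _
        _ = p * ((a.val / p) * t.val) := by
            rw [← Nat.mul_assoc, Nat.mul_div_cancel' ha]
        _ ≡ p * ((a.val / p % p ^ (n - 1)) * (t.val % p ^ (n - 1)) % p ^ (n - 1))
            [MOD p ^ n] := by
            have h2 := Nat.ModEq.mul_left' p h1.symm
            rwa [show p * p ^ (n - 1) = p ^ n from by rw [hpn, Nat.mul_comm]] at h2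
  rw [hsplit, hunit] at hfull
  rw [hnonunit, aux_sum_zmod hznonzero] at hfull
  have hcast : (ZMod.castHom (pow_dvd_pow p (Nat.sub_le n 1)) (ZMod (p ^ (n - 1))) t = 0)
      ↔ (((t.val : ℕ) : ZMod (p ^ (n - 1))) = 0) := by
    rw [ZMod.castHom_apply, ← ZMod.natCast_val]
  rw [eq_sub_iff_add_eq, ← hfull]
  congr 1
  by_cases h : ZMod.castHom (pow_dvd_pow p (Nat.sub_le n 1)) (ZMod (p ^ (n - 1))) t = 0
  · rw [if_pos h, if_pos (hcast.mp h)]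
  · rw [if_neg h, if_neg (fun hh => h (hcast.mpr hh))]

lemma aux_gauss (p : ℕ) [Fact p.Prime] (n : ℕ) (hn : n ≠ 0) {z : ℂ} (hz : orderOf z = p ^ n)
    (χ : (ZMod (p ^ n))ˣ →* ℂˣ)
    (hprim : ∃ k₀ : (ZMod (p ^ n))ˣ,
      ZMod.castHom (pow_dvd_pow p (Nat.sub_le n 1)) (ZMod (p ^ (n - 1)))
          (k₀ : ZMod (p ^ n)) = 1 ∧ χ k₀ ≠ 1) :
    (∑ a : (ZMod (p ^ n))ˣ, ((χ⁻¹ a : ℂˣ) : ℂ) * z ^ ((a : ZMod (p ^ n)).val)) *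
      (∑ a : (ZMod (p ^ n))ˣ, ((χ a : ℂˣ) : ℂ) * z ^ ((a : ZMod (p ^ n)).val)) =
      ((χ (-1) : ℂˣ) : ℂ)⁻¹ * ((p ^ n : ℕ) : ℂ) := by
  have hp : p.Prime := Fact.out
  haveI : NeZero (p ^ n) := ⟨pow_ne_zero n hp.ne_zero⟩
  have hcong : ∀ A B : ℕ, A ≡ B [MOD p ^ n] → z ^ A = z ^ B := by
    intro A B hAB
    rw [← pow_mod_orderOf z A, ← pow_mod_orderOf z B, hz]
    exact congrArg (z ^ ·) hAB
  set U := (ZMod (p ^ n))ˣ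
  set φ := ZMod.castHom (pow_dvd_pow p (Nat.sub_le n 1)) (ZMod (p ^ (n - 1)))
  obtain ⟨k₀, hk₀1, hk₀χ⟩ := hprim
  -- Step 1: expand the product
  have step1 : (∑ a : U, ((χ⁻¹ a : ℂˣ) : ℂ) * z ^ ((a : ZMod (p ^ n)).val)) *
      (∑ a : U, ((χ a : ℂˣ) : ℂ) * z ^ ((a : ZMod (p ^ n)).val)) =
      ∑ a : U, ∑ b : U, ((χ⁻¹ a : ℂˣ) : ℂ) * ((χ b : ℂˣ) : ℂ) *
        z ^ ((↑a + ↑b : ZMod (p ^ n)).val) := by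
    rw [Finset.sum_mul_sum]
    refine Finset.sum_congr rfl fun a _ => Finset.sum_congr rfl fun b _ => ?_
    have hzz : z ^ ((a : ZMod (p ^ n)).val) * z ^ ((b : ZMod (p ^ n)).val) =
        z ^ ((↑a + ↑b : ZMod (p ^ n)).val) := by
      rw [← pow_add]
      refine hcong _ _ ?_
      rw [ZMod.val_add]
      exact (Nat.mod_modEq _ _).symm
    rw [← hzz]; ring
  -- Step 2: substitute a = c * b
  have step2 : ∑ a : U, ∑ b : U, ((χ⁻¹ a : ℂˣ) : ℂ) * ((χ b : ℂˣ) : ℂ) *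
        z ^ ((↑a + ↑b : ZMod (p ^ n)).val) =
      ∑ c : U, ((χ⁻¹ c : ℂˣ) : ℂ) *
        ∑ b : U, z ^ ((↑b * (↑c + 1) : ZMod (p ^ n)).val) := by
    rw [Finset.sum_comm]
    have inner : ∀ b : U, ∑ a : U, ((χ⁻¹ a : ℂˣ) : ℂ) * ((χ b : ℂˣ) : ℂ) *
          z ^ ((↑a + ↑b : ZMod (p ^ n)).val) =
        ∑ c : U, ((χ⁻¹ c : ℂˣ) : ℂ) * z ^ ((↑b * (↑c + 1) : ZMod (p ^ n)).val) := by
      intro b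
      refine (Fintype.sum_equiv (Equiv.mulRight b)
        (fun c => ((χ⁻¹ c : ℂˣ) : ℂ) * z ^ ((↑b * (↑c + 1) : ZMod (p ^ n)).val))
        (fun a => ((χ⁻¹ a : ℂˣ) : ℂ) * ((χ b : ℂˣ) : ℂ) *
          z ^ ((↑a + ↑b : ZMod (p ^ n)).val)) ?_).symm
      intro c
      have hmul : ((χ⁻¹ (c * b) : ℂˣ) : ℂ) * ((χ b : ℂˣ) : ℂ) = ((χ⁻¹ c : ℂˣ) : ℂ) := by
        rw [← Units.val_mul]
        congr 1
        rw [map_mul, mul_assoc, MonoidHom.inv_apply χ b, inv_mul_cancel, mul_one]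
      have hexp : ((↑(c * b) : ZMod (p ^ n)) + ↑b) = (↑b * (↑c + 1) : ZMod (p ^ n)) := by
        rw [Units.val_mul]; ring
      show ((χ⁻¹ c : ℂˣ) : ℂ) * z ^ ((↑b * (↑c + 1) : ZMod (p ^ n)).val) =
        ((χ⁻¹ (c * b) : ℂˣ) : ℂ) * ((χ b : ℂˣ) : ℂ) *
          z ^ (((↑(c * b) : ZMod (p ^ n)) + ↑b).val)
      rw [hmul, hexp]
    rw [Finset.sum_congr rfl fun b _ => inner b, Finset.sum_comm]
    refine Finset.sum_congr rfl fun c _ => ?_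
    rw [Finset.mul_sum]
  rw [step1, step2]
  -- Step 3: evaluate the inner sums
  have step3 : ∀ c : U, ∑ b : U, z ^ ((↑b * (↑c + 1) : ZMod (p ^ n)).val) =
      (if (↑c + 1 : ZMod (p ^ n)) = 0 then ((p ^ n : ℕ) : ℂ) else 0)
        - (if φ ((↑c : ZMod (p ^ n)) + 1) = 0 then ((p ^ (n - 1) : ℕ) : ℂ) else 0) :=
    fun c => aux_S p n hn hz ((↑c : ZMod (p ^ n)) + 1)
  simp only [step3, mul_sub]
  rw [Finset.sum_sub_distrib]
  -- First piece: only c = -1 contributes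
  have hA : ∑ c : U, ((χ⁻¹ c : ℂˣ) : ℂ) *
      (if (↑c + 1 : ZMod (p ^ n)) = 0 then ((p ^ n : ℕ) : ℂ) else 0) =
      ((χ⁻¹ (-1) : ℂˣ) : ℂ) * ((p ^ n : ℕ) : ℂ) := by
    have hiff : ∀ c : U, ((↑c + 1 : ZMod (p ^ n)) = 0) ↔ c = -1 := by
      intro c
      constructor
      · intro h
        have h2 : (↑c : ZMod (p ^ n)) = -1 := eq_neg_of_add_eq_zero_left h
        apply Units.val_inj.mp
        rw [h2, Units.val_neg, Units.val_one]
      · intro h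
        subst h
        rw [Units.val_neg, Units.val_one, neg_add_cancel]
    simp only [hiff, mul_ite, mul_zero]
    rw [Finset.sum_ite_eq' Finset.univ (-1 : U)
      (fun c => ((χ⁻¹ c : ℂˣ) : ℂ) * ((p ^ n : ℕ) : ℂ)), if_pos (Finset.mem_univ _)]
  -- Second piece vanishes by primitivity
  have hB : ∑ c : U, ((χ⁻¹ c : ℂˣ) : ℂ) *
      (if φ ((↑c : ZMod (p ^ n)) + 1) = 0 then ((p ^ (n - 1) : ℕ) : ℂ) else 0) = 0 := by
    have hcond : ∀ c : U, (φ ((↑c : ZMod (p ^ n)) + 1) = 0) ↔ φ (↑c : ZMod (p ^ n)) = -1 := by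
      intro c
      rw [map_add, map_one, add_eq_zero_iff_eq_neg]
    simp only [hcond, mul_ite, mul_zero]
    rw [← Finset.sum_filter]
    rw [← Finset.sum_mul]
    have h0 : ∑ c ∈ Finset.univ.filter (fun c : U => φ (↑c : ZMod (p ^ n)) = -1),
        ((χ⁻¹ c : ℂˣ) : ℂ) = 0 := by
      refine aux_key0 χ⁻¹ (fun c : U => φ (↑c : ZMod (p ^ n)) = -1) k₀ ?_ ?_
      · intro k
        show φ (↑k : ZMod (p ^ n)) = -1 ↔ φ (↑(k₀ * k) : ZMod (p ^ n)) = -1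
        rw [Units.val_mul, map_mul, hk₀1, one_mul]
      · show (χ⁻¹) k₀ ≠ 1
        rw [MonoidHom.inv_apply]
        exact fun h => hk₀χ (inv_eq_one.mp h)
    rw [h0, zero_mul]
  rw [hA, hB, sub_zero]
  congr 1
  rw [MonoidHom.inv_apply]
  exact Units.val_inv_eq_inv_val _

lemma aux_ord (p : ℕ) [Fact p.Prime] (ζ : ℕ → ℂ) (hζ0 : ζ 0 = 1) (hζ1 : ζ 1 ≠ 1)
    (hζc : ∀ m : ℕ, ζ (m + 1) ^ p = ζ m) : ∀ n, orderOf (ζ n) = p ^ n := by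
  have hp : p.Prime := Fact.out
  have hpow : ∀ k m : ℕ, ζ (m + k) ^ (p ^ k) = ζ m := by
    intro k
    induction k with
    | zero => intro m; simp
    | succ k ih =>
      intro m
      calc ζ (m + (k + 1)) ^ (p ^ (k + 1))
          = (ζ (m + k + 1) ^ p) ^ (p ^ k) := by
            rw [pow_succ', pow_mul]; rfl
        _ = ζ (m + k) ^ (p ^ k) := by rw [hζc]
        _ = ζ m := ih m
  have hne1 : ∀ m, ζ (m + 1) ≠ 1 := by
    intro m
    induction m with
    | zero => exact hζ1
    | succ m ih =>
      intro h
      exact ih (by rw [← hζc (m + 1), h, one_pow])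
  intro n
  cases n with
  | zero => simp [hζ0]
  | succ n =>
    have h1 : ζ (n + 1) ^ (p ^ (n + 1)) = 1 := by
      have := hpow (n + 1) 0
      rwa [Nat.zero_add, hζ0] at this
    have hd := orderOf_dvd_of_pow_eq_one h1
    obtain ⟨k, hk, hkeq⟩ := (Nat.dvd_prime_pow hp).mp hd
    rcases Nat.lt_or_ge k (n + 1) with hlt | hge
    · exfalso
      have hkn : k ≤ n := Nat.lt_succ_iff.mp hlt
      have hpn : ζ (n + 1) ^ (p ^ n) = 1 := by
        have hdvd2 : orderOf (ζ (n + 1)) ∣ p ^ n := by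
          rw [hkeq]; exact pow_dvd_pow p hkn
        exact orderOf_dvd_iff_pow_eq_one.mp hdvd2
      have h2 : ζ (n + 1) ^ (p ^ n) = ζ 1 := by
        have := hpow n 1
        rwa [Nat.add_comm 1 n] at this
      exact hζ1 (h2.symm.trans hpn)
    · rw [hkeq, le_antisymm hk hge]



/-- For a continuous character `η : ℚ_p^× → ℂ^×`, define
`ε(η, s) = 1` if `η` is unramified and `ε(η, s) = p^{-ns} η(p)^n G(η⁻¹)` if `η` has conductor
`p^n` (`n ≥ 1`), where `G` is the Gauss sum relative to the additive character determined by
the fixed compatible system `(ζ_{p^n})` of `p`-power roots of unity.  Then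
`ε(η, s) · ε(η⁻¹, 1-s) = η(-1)`.

Here the conductor data is encoded by `n` together with a character
`η₀ : (ℤ/p^nℤ)^× → ℂ^×` through which `η` factors on `ℤ_p^×` (`hη₀`), and the primitivity of
`η₀` (minimality of `n`) is `hprim`; `G χ = Σ_{a ∈ (ℤ/p^n)^×} χ(a) ζ_{p^n}^a`. -/
theorem epsilon_factor_functional_equation_GL1
    (p : ℕ) [Fact p.Prime] (ζ : ℕ → ℂ)
    (hζ0 : ζ 0 = 1) (hζ1 : ζ 1 ≠ 1) (hζc : ∀ m : ℕ, ζ (m + 1) ^ p = ζ m)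
    (hp0 : (p : ℚ_[p]) ≠ 0)
    (η : ℚ_[p]ˣ →* ℂˣ) (hcont : Continuous η)
    (n : ℕ) (η₀ : (ZMod (p ^ n))ˣ →* ℂˣ)
    (hη₀ : ∀ u : ℤ_[p]ˣ,
      η (Units.map (PadicInt.Coe.ringHom (p := p)).toMonoidHom u) =
        η₀ (Units.map (PadicInt.toZModPow n).toMonoidHom u))
    (hprim : n ≠ 0 → ∃ u : ℤ_[p]ˣ,
      PadicInt.toZModPow (n - 1) (u : ℤ_[p]) = 1 ∧
        η (Units.map (PadicInt.Coe.ringHom (p := p)).toMonoidHom u) ≠ 1)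
    (G : ((ZMod (p ^ n))ˣ →* ℂˣ) → ℂ)
    (hG : ∀ χ : (ZMod (p ^ n))ˣ →* ℂˣ,
      G χ = ∑ a : (ZMod (p ^ n))ˣ, (χ a : ℂ) * ζ n ^ ((a : ZMod (p ^ n)).val))
    (ε : (ℚ_[p]ˣ →* ℂˣ) → ℂ → ℂ)
    (hε : ∀ s : ℂ,
      ε η s = if n = 0 then 1
        else (p : ℂ) ^ (-(n : ℂ) * s) * ((η (Units.mk0 (p : ℚ_[p]) hp0) : ℂ) ^ n) * G η₀⁻¹)
    (hε' : ∀ s : ℂ,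
      ε η⁻¹ s = if n = 0 then 1
        else (p : ℂ) ^ (-(n : ℂ) * s) * ((η⁻¹ (Units.mk0 (p : ℚ_[p]) hp0) : ℂ) ^ n) * G η₀) :
    ∀ s : ℂ, ε η s * ε η⁻¹ (1 - s) = (η (-1 : ℚ_[p]ˣ) : ℂ) := by
  intro s
  have hp : p.Prime := Fact.out
  -- η(-1) = η₀(-1)
  have hmap1 : Units.map (PadicInt.Coe.ringHom (p := p)).toMonoidHom (-1 : ℤ_[p]ˣ) =
      (-1 : ℚ_[p]ˣ) := by
    apply Units.ext
    rw [Units.coe_map]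
    simp
  have hmap2 : Units.map (PadicInt.toZModPow n).toMonoidHom (-1 : ℤ_[p]ˣ) =
      (-1 : (ZMod (p ^ n))ˣ) := by
    apply Units.ext
    rw [Units.coe_map]
    simp
  have hneg : (η (-1 : ℚ_[p]ˣ) : ℂ) = ((η₀ (-1) : ℂˣ) : ℂ) := by
    have h := hη₀ (-1)
    rw [hmap1, hmap2] at h
    exact congrArg Units.val h
  by_cases hn : n = 0
  · rw [hε s, hε' (1 - s), if_pos hn, if_pos hn, one_mul, hneg]
    have hss : Subsingleton (ZMod (p ^ n)) := by
      rw [hn, pow_zero]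
      infer_instance
    have hone : (-1 : (ZMod (p ^ n))ˣ) = 1 :=
      Units.ext (Subsingleton.elim _ _)
    rw [hone, map_one, Units.val_one]
  · haveI : NeZero (p ^ n) := ⟨pow_ne_zero n hp.ne_zero⟩
    rw [hε s, hε' (1 - s), if_neg hn, if_neg hn, hneg]
    have hord := aux_ord p ζ hζ0 hζ1 hζc n
    have hprim' : ∃ k₀ : (ZMod (p ^ n))ˣ,
        ZMod.castHom (pow_dvd_pow p (Nat.sub_le n 1)) (ZMod (p ^ (n - 1)))
          (k₀ : ZMod (p ^ n)) = 1 ∧ η₀ k₀ ≠ 1 := by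
      obtain ⟨u, hu1, huη⟩ := hprim hn
      refine ⟨Units.map (PadicInt.toZModPow n).toMonoidHom u, ?_, ?_⟩
      · rw [Units.coe_map]
        have hcomp := PadicInt.zmod_cast_comp_toZModPow (p := p) (n - 1) n (Nat.sub_le n 1)
        calc ZMod.castHom (pow_dvd_pow p (Nat.sub_le n 1)) (ZMod (p ^ (n - 1)))
              ((PadicInt.toZModPow n).toMonoidHom (↑u : ℤ_[p]))
            = ((ZMod.castHom (pow_dvd_pow p (Nat.sub_le n 1))
                (ZMod (p ^ (n - 1)))).comp (PadicInt.toZModPow n)) (↑u : ℤ_[p]) := rfl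
          _ = PadicInt.toZModPow (n - 1) (↑u : ℤ_[p]) := by rw [hcomp]
          _ = 1 := hu1
      · intro h1
        apply huη
        rw [hη₀ u, h1]
    have hgauss := aux_gauss p n hn hord η₀ hprim'
    have hGG : G η₀⁻¹ * G η₀ = ((η₀ (-1) : ℂˣ) : ℂ)⁻¹ * ((p ^ n : ℕ) : ℂ) := by
      rw [hG η₀⁻¹, hG η₀]
      exact hgauss
    have hpC : (p : ℂ) ≠ 0 := Nat.cast_ne_zero.mpr hp.ne_zero
    have hcpow : (p : ℂ) ^ (-(n : ℂ) * s) * (p : ℂ) ^ (-(n : ℂ) * (1 - s)) =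
        (((p ^ n : ℕ) : ℂ))⁻¹ := by
      rw [← Complex.cpow_add _ _ hpC]
      have he : (-(n : ℂ) * s) + (-(n : ℂ) * (1 - s)) = -(n : ℂ) := by ring
      rw [he, Complex.cpow_neg, Complex.cpow_natCast]
      norm_cast
    set X : ℂ := (η (Units.mk0 (p : ℚ_[p]) hp0) : ℂ) with hX
    have hXne : X ≠ 0 := Units.ne_zero _
    have hinv : ((η⁻¹ (Units.mk0 (p : ℚ_[p]) hp0) : ℂˣ) : ℂ) = X⁻¹ := by
      rw [MonoidHom.inv_apply, hX]
      exact Units.val_inv_eq_inv_val _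
    have hXpow : X ^ n * (X⁻¹) ^ n = 1 := by
      rw [← mul_pow, mul_inv_cancel₀ hXne, one_pow]
    have hPn : ((p ^ n : ℕ) : ℂ) ≠ 0 := Nat.cast_ne_zero.mpr (pow_ne_zero n hp.ne_zero)
    have hsq : ((η₀ (-1) : ℂˣ) : ℂ)⁻¹ = ((η₀ (-1) : ℂˣ) : ℂ) := by
      have h2 : ((η₀ (-1) : ℂˣ) : ℂ) * ((η₀ (-1) : ℂˣ) : ℂ) = 1 := by
        rw [← Units.val_mul, ← map_mul, neg_mul_neg, one_mul, map_one, Units.val_one]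
      exact inv_eq_of_mul_eq_one_right h2
    rw [hinv]
    calc (p : ℂ) ^ (-(n : ℂ) * s) * X ^ n * G η₀⁻¹ *
          ((p : ℂ) ^ (-(n : ℂ) * (1 - s)) * (X⁻¹) ^ n * G η₀)
        = ((p : ℂ) ^ (-(n : ℂ) * s) * (p : ℂ) ^ (-(n : ℂ) * (1 - s))) *
            (X ^ n * (X⁻¹) ^ n) * (G η₀⁻¹ * G η₀) := by ring
      _ = (((p ^ n : ℕ) : ℂ))⁻¹ * 1 * (((η₀ (-1) : ℂˣ) : ℂ)⁻¹ * ((p ^ n : ℕ) : ℂ)) := by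
          rw [hcpow, hXpow, hGG]
      _ = ((η₀ (-1) : ℂˣ) : ℂ) := by
          rw [hsq, mul_one]
          field_simp
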